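/- Let F and H be probability measures on a measurable space with F ≠ H. Then there exists a unique ν* ∈ [0,1) and a probability measure G such that F = (1-ν*)G + ν*H and G is irreducible with respect to H. Moreover ν* equals the maximum of the set {α ∈ [0,1] : there exists a probability measure G' with F = (1-α)G' + αH}. -/

import Mathlib

open MeasureTheory

/-- The mixture `(1-a)·P + a·Q` of two measures. -/
noncomputable def mix {X : Type*} [MeasurableSpace X] (a : ℝ) (P Q : Measure X) :
    Measure X :=
  ENNReal.ofReal (1 - a) • P + ENNReal.ofReal a • Q

/-- `G` is irreducible with respect to `H`: no decomposition `G = γ·H + (1-γ)·F'`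
with `F'` a probability measure and `0 < γ ≤ 1`. -/
def Irred {X : Type*} [MeasurableSpace X] (G H : Measure X) : Prop :=
  ¬ ∃ (γ : ℝ) (F' : Measure X), IsProbabilityMeasure F' ∧ 0 < γ ∧ γ ≤ 1 ∧
      G = mix γ F' H

/-- Mutual irreducibility. -/
def MutIrred {X : Type*} [MeasurableSpace X] (P Q : Measure X) : Prop :=
  Irred P Q ∧ Irred Q P

/-- The set of feasible mixture proportions of `H` in `F`. -/
def nuSet {X : Type*} [MeasurableSpace X] (F H : Measure X) : Set ℝ :=
  {α | α ∈ Set.Icc (0:ℝ) 1 ∧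
    ∃ G' : Measure X, IsProbabilityMeasure G' ∧ F = mix α G' H}

/-- `ν*(F,H)`: the maximal proportion of `H` in `F`. -/
noncomputable def nuStar {X : Type*} [MeasurableSpace X] (F H : Measure X) : ℝ :=
  sSup (nuSet F H)

section Aux

variable {X : Type*} [MeasurableSpace X]

lemma mix_apply (a : ℝ) (P Q : Measure X) (s : Set X) :
    mix a P Q s = ENNReal.ofReal (1 - a) * P s + ENNReal.ofReal a * Q s := by
  simp [mix]

/-- A probability measure dominated by another probability measure equals it. -/
lemma prob_le_eq (μ ν : Measure X) [IsProbabilityMeasure μ] [IsProbabilityMeasure ν]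
    (h : μ ≤ ν) : μ = ν := by
  ext s hs
  refine le_antisymm (Measure.le_iff'.1 h s) ?_
  calc ν s = 1 - ν sᶜ := by rw [← prob_compl_eq_one_sub hs.compl, compl_compl]
    _ ≤ 1 - μ sᶜ := tsub_le_tsub_left (Measure.le_iff'.1 h sᶜ) 1
    _ = μ s := by rw [← prob_compl_eq_one_sub hs.compl, compl_compl]

/-- Decomposition from domination. -/
lemma decompose (P H : Measure X) [IsProbabilityMeasure P] [IsProbabilityMeasure H]
    {α : ℝ} (h0 : 0 ≤ α) (h1 : α < 1) (hle : ENNReal.ofReal α • H ≤ P) :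
    ∃ Q : Measure X, IsProbabilityMeasure Q ∧ P = mix α Q H := by
  have hc0 : ENNReal.ofReal (1 - α) ≠ 0 := by
    simp [ENNReal.ofReal_eq_zero]; linarith
  have hctop : ENNReal.ofReal (1 - α) ≠ ⊤ := ENNReal.ofReal_ne_top
  haveI : IsFiniteMeasure (ENNReal.ofReal α • H) :=
    ⟨by rw [Measure.smul_apply, smul_eq_mul]
        exact ENNReal.mul_lt_top ENNReal.ofReal_lt_top (measure_lt_top H _)⟩
  set D := P - ENNReal.ofReal α • H with hD
  have hDadd : D + ENNReal.ofReal α • H = P := Measure.sub_add_cancel_of_le hle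
  have hDuniv : D Set.univ = ENNReal.ofReal (1 - α) := by
    rw [hD, Measure.sub_apply MeasurableSet.univ hle, Measure.smul_apply, smul_eq_mul,
      measure_univ, measure_univ, mul_one, ENNReal.ofReal_sub 1 h0, ENNReal.ofReal_one]
  refine ⟨(ENNReal.ofReal (1 - α))⁻¹ • D, ⟨?_⟩, ?_⟩
  · rw [Measure.smul_apply, smul_eq_mul, hDuniv, ENNReal.inv_mul_cancel hc0 hctop]
  · rw [mix, smul_smul, ENNReal.mul_inv_cancel hc0 hctop, one_smul, hDadd]

lemma mix_ge (a : ℝ) (P Q : Measure X) : ENNReal.ofReal a • Q ≤ mix a P Q :=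
  Measure.le_iff'.2 fun s => by
    rw [mix_apply, Measure.smul_apply, smul_eq_mul]; exact le_add_self

lemma mem_nuSet_iff {F H : Measure X} [IsProbabilityMeasure F] [IsProbabilityMeasure H]
    (hne : F ≠ H) {α : ℝ} :
    α ∈ nuSet F H ↔ 0 ≤ α ∧ α < 1 ∧ ENNReal.ofReal α • H ≤ F := by
  constructor
  · rintro ⟨⟨h0, h1⟩, G', hG', hFeq⟩
    have hα1 : α ≠ 1 := by
      rintro rfl
      apply hne
      rw [hFeq, mix]
      simp
    refine ⟨h0, lt_of_le_of_ne h1 hα1, ?_⟩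
    rw [hFeq]; exact mix_ge α G' H
  · rintro ⟨h0, h1, hle⟩
    obtain ⟨Q, hQ, hPeq⟩ := decompose F H h0 h1 hle
    exact ⟨⟨h0, h1.le⟩, Q, hQ, hPeq⟩

lemma zero_mem_nuSet (F H : Measure X) [IsProbabilityMeasure F] :
    (0:ℝ) ∈ nuSet F H := by
  refine ⟨⟨le_refl 0, zero_le_one⟩, F, inferInstance, ?_⟩
  rw [mix]; simp

lemma bddAbove_nuSet (F H : Measure X) : BddAbove (nuSet F H) :=
  ⟨1, fun _ ha => ha.1.2⟩

lemma nuStar_mem {F H : Measure X} [IsProbabilityMeasure F] [IsProbabilityMeasure H]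
    (hne : F ≠ H) : nuStar F H ∈ nuSet F H := by
  have hnon : (nuSet F H).Nonempty := ⟨0, zero_mem_nuSet F H⟩
  have hbdd := bddAbove_nuSet F H
  have h0 : 0 ≤ nuStar F H := le_csSup hbdd (zero_mem_nuSet F H)
  have h1 : nuStar F H ≤ 1 := csSup_le hnon fun _ ha => ha.1.2
  have key : ENNReal.ofReal (nuStar F H) = ⨆ a : nuSet F H, ENNReal.ofReal a := by
    rw [nuStar, Monotone.map_csSup_of_continuousAt
      ENNReal.continuous_ofReal.continuousAt
      (fun _ _ h => ENNReal.ofReal_le_ofReal h) hnon hbdd, sSup_image']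
  have hle : ENNReal.ofReal (nuStar F H) • H ≤ F := by
    refine Measure.le_iff'.2 fun s => ?_
    rw [Measure.smul_apply, smul_eq_mul, key, ENNReal.iSup_mul]
    refine iSup_le ?_
    rintro ⟨a, ha⟩
    have := (mem_nuSet_iff hne).1 ha
    have h := Measure.le_iff'.1 this.2.2 s
    rwa [Measure.smul_apply, smul_eq_mul] at h
  have hlt : nuStar F H < 1 := by
    rcases lt_or_eq_of_le h1 with h | h
    · exact h
    · exfalso
      apply hne
      rw [h, ENNReal.ofReal_one, one_smul] at hle
      exact (prob_le_eq H F hle).symm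
  exact (mem_nuSet_iff hne).2 ⟨h0, hlt, hle⟩

/-- Cancellation: the mixture determines the first component. -/
lemma mix_cancel {ν : ℝ} (hν1 : ν < 1) {G G' H : Measure X} [IsProbabilityMeasure H]
    (h : mix ν G H = mix ν G' H) : G = G' := by
  have hc0 : ENNReal.ofReal (1 - ν) ≠ 0 := by
    simp [ENNReal.ofReal_eq_zero]; linarith
  have hctop : ENNReal.ofReal (1 - ν) ≠ ⊤ := ENNReal.ofReal_ne_top
  ext s hs
  have hh := congrArg (fun μ : Measure X => μ s) h
  simp only [mix_apply] at hh
  have hfin : ENNReal.ofReal ν * H s ≠ ⊤ :=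
    ENNReal.mul_ne_top ENNReal.ofReal_ne_top (measure_ne_top H s)
  rw [add_comm (ENNReal.ofReal (1-ν) * G s), add_comm (ENNReal.ofReal (1-ν) * G' s),
    ENNReal.add_right_inj hfin] at hh
  exact (ENNReal.mul_right_inj hc0 hctop).1 hh

lemma irred_iff_greatest {F G H : Measure X} [IsProbabilityMeasure F]
    [IsProbabilityMeasure H] [IsProbabilityMeasure G] {ν : ℝ}
    (h0 : 0 ≤ ν) (h1 : ν < 1) (hF : F = mix ν G H) (hne : F ≠ H) :
    Irred G H ↔ IsGreatest (nuSet F H) ν := by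
  have hc0 : ENNReal.ofReal (1 - ν) ≠ 0 := by
    simp [ENNReal.ofReal_eq_zero]; linarith
  have hctop : ENNReal.ofReal (1 - ν) ≠ ⊤ := ENNReal.ofReal_ne_top
  constructor
  · intro hirr
    refine ⟨⟨⟨h0, h1.le⟩, G, inferInstance, hF⟩, fun α hα => ?_⟩
    by_contra hcon
    push_neg at hcon
    obtain ⟨hα0, hα1, hαle⟩ := (mem_nuSet_iff hne).1 hα
    set γ : ℝ := (α - ν) / (1 - ν) with hγ
    have hγ0 : 0 < γ := div_pos (by linarith) (by linarith)
    have hγ1 : γ < 1 := (div_lt_one (by linarith)).2 (by linarith)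
    have hγle : ENNReal.ofReal γ • H ≤ G := by
      refine Measure.le_iff'.2 fun s => ?_
      have hs1 := Measure.le_iff'.1 hαle s
      rw [Measure.smul_apply, smul_eq_mul, hF, mix_apply] at hs1
      have hsplit : ENNReal.ofReal α = ENNReal.ofReal (α - ν) + ENNReal.ofReal ν := by
        rw [← ENNReal.ofReal_add (by linarith) h0]; ring_nf
      rw [hsplit, add_mul, add_comm (ENNReal.ofReal (1-ν) * G s)] at hs1
      have hfin : ENNReal.ofReal ν * H s ≠ ⊤ :=
        ENNReal.mul_ne_top ENNReal.ofReal_ne_top (measure_ne_top H s)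
      rw [add_comm (ENNReal.ofReal ν * H s) (ENNReal.ofReal (1-ν) * G s),
        ENNReal.add_le_add_iff_right hfin] at hs1
      rw [Measure.smul_apply, smul_eq_mul,
        ← ENNReal.mul_le_mul_iff_right hc0 hctop, ← mul_assoc, ← ENNReal.ofReal_mul (by linarith)]
      have : (1 - ν) * γ = α - ν := by rw [hγ, ← mul_div_assoc]; exact mul_div_cancel_left₀ _ (by linarith)
      rwa [this]
    obtain ⟨Q, hQ, hGeq⟩ := decompose G H hγ0.le hγ1 hγle
    exact hirr ⟨γ, Q, hQ, hγ0, hγ1.le, hGeq⟩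
  · rintro hgr ⟨γ, F', hF', hγ0, hγ1, hGeq⟩
    set α : ℝ := ν + γ * (1 - ν) with hα
    have hFeq : F = mix α F' H := by
      rw [hF, hGeq, mix, mix, mix, smul_add, smul_smul, smul_smul, add_assoc,
        ← add_smul, ← ENNReal.ofReal_mul (by linarith), ← ENNReal.ofReal_mul (by linarith),
        ← ENNReal.ofReal_add (by nlinarith) h0]
      congr 2 <;> rw [hα] <;> ring_nf
    have hmem : α ∈ nuSet F H :=
      ⟨⟨by nlinarith, by nlinarith⟩, F', hF', hFeq⟩
    have := hgr.2 hmem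
    nlinarith

end Aux

theorem canonical_decomposition {X : Type*} [MeasurableSpace X]
    (F H : Measure X) [IsProbabilityMeasure F] [IsProbabilityMeasure H]
    (hne : F ≠ H) :
    (∃! p : ℝ × Measure X,
        p.1 ∈ Set.Ico (0:ℝ) 1 ∧ IsProbabilityMeasure p.2 ∧
        F = mix p.1 p.2 H ∧ Irred p.2 H) ∧
    ∀ p : ℝ × Measure X,
      (p.1 ∈ Set.Ico (0:ℝ) 1 ∧ IsProbabilityMeasure p.2 ∧
        F = mix p.1 p.2 H ∧ Irred p.2 H) →
      IsGreatest (nuSet F H) p.1 := by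
  have hmem := nuStar_mem hne
  obtain ⟨⟨h0, _⟩, Gs, hGs, hFeq⟩ := hmem
  have hlt : nuStar F H < 1 := ((mem_nuSet_iff hne).1 (nuStar_mem hne)).2.1
  have hgr : IsGreatest (nuSet F H) (nuStar F H) :=
    ⟨nuStar_mem hne, fun a ha => le_csSup (bddAbove_nuSet F H) ha⟩
  have hirr : Irred Gs H := by
    haveI := hGs
    exact (irred_iff_greatest h0 hlt hFeq hne).2 hgr
  have key : ∀ p : ℝ × Measure X,
      (p.1 ∈ Set.Ico (0:ℝ) 1 ∧ IsProbabilityMeasure p.2 ∧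
        F = mix p.1 p.2 H ∧ Irred p.2 H) →
      IsGreatest (nuSet F H) p.1 := by
    rintro ⟨ν, G⟩ ⟨⟨hp0, hp1⟩, hGp, hFp, hirrp⟩
    haveI := hGp
    exact (irred_iff_greatest hp0 hp1 hFp hne).1 hirrp
  refine ⟨⟨(nuStar F H, Gs), ⟨⟨h0, hlt⟩, hGs, hFeq, hirr⟩, ?_⟩, key⟩
  rintro ⟨ν, G⟩ hp
  have hgr' := key (ν, G) hp
  have hν : ν = nuStar F H := hgr'.unique hgr
  obtain ⟨_, hGp, hFp, _⟩ := hp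
  haveI := hGp
  have hGeq : G = Gs := by
    rw [← hν] at hFeq hlt
    exact mix_cancel hlt (hFp.symm.trans hFeq)
  simp [hν, hGeq]
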